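/- Let $c_\gamma, \lambda > 0$ with $\lambda \leq 1$ and $c_\gamma \geq \lambda + \sqrt{\lambda^{-2} - 1}$. Then for all $u \in [0,1]$, $c_\gamma u - \sqrt{u(1-u)} + \lambda(1-u) \geq \lambda/2$. -/

import Mathlib

theorem stmt5 (cγ lam : ℝ) (hc : 0 < cγ) (hlam0 : 0 < lam) (hlam1 : lam ≤ 1)
    (hcγ : lam + Real.sqrt (lam⁻¹ ^ 2 - 1) ≤ cγ) :
    ∀ u ∈ Set.Icc (0 : ℝ) 1,
      lam / 2 ≤ cγ * u - Real.sqrt (u * (1 - u)) + lam * (1 - u) := by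
  intro u hu
  obtain ⟨hu0, hu1⟩ := hu
  set s := Real.sqrt (lam⁻¹ ^ 2 - 1) with hs
  have hinv : 1 ≤ lam⁻¹ := by
    rw [le_inv_comm₀ one_pos hlam0]
    simpa using hlam1
  have hnn : (0:ℝ) ≤ lam⁻¹ ^ 2 - 1 := by nlinarith
  have hs0 : 0 ≤ s := Real.sqrt_nonneg _
  have hs2 : s ^ 2 = lam⁻¹ ^ 2 - 1 := Real.sq_sqrt hnn
  have hls2 : lam ^ 2 * s ^ 2 = 1 - lam ^ 2 := by
    rw [hs2]
    field_simp
  have hrhsnn : 0 ≤ (cγ - lam) * u + lam / 2 := by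
    nlinarith [mul_nonneg hs0 hu0]
  have has : s ≤ cγ - lam := by linarith
  have h3 : u * (1 - u) ≤ (s * u + lam / 2) ^ 2 := by
    have hl2 : 0 < lam ^ 2 := by positivity
    rw [← mul_le_mul_iff_right₀ hl2]
    nlinarith [sq_nonneg (u - lam ^ 2 / 2),
      mul_nonneg (mul_nonneg hs0 (pow_pos hlam0 3).le) hu0, hls2, sq_nonneg u]
  have h2 : (s * u + lam / 2) ^ 2 ≤ ((cγ - lam) * u + lam / 2) ^ 2 := by
    have hsu : s * u + lam / 2 ≤ (cγ - lam) * u + lam / 2 := by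
      nlinarith [mul_le_mul_of_nonneg_right has hu0]
    have hsnn : 0 ≤ s * u + lam / 2 := by positivity
    exact pow_le_pow_left₀ hsnn hsu 2
  have h1 : u * (1 - u) ≤ ((cγ - lam) * u + lam / 2) ^ 2 := le_trans h3 h2
  have key : Real.sqrt (u * (1 - u)) ≤ (cγ - lam) * u + lam / 2 :=
    calc Real.sqrt (u * (1 - u)) ≤ Real.sqrt (((cγ - lam) * u + lam / 2) ^ 2) :=
          Real.sqrt_le_sqrt h1
      _ = (cγ - lam) * u + lam / 2 := Real.sqrt_sq hrhsnn
  linarith
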